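/- Let N ≥ 0 and 0 ≤ j < i ≤ N be integers. Then ∫_{−1}^{1} ((1−c)/2)^{2+(N−i)+(N−j)} · P_i^{(2N+3−2i,0)}(c) · P_j^{(2N+3−2j,0)}(c) dc = 0. -/

import Mathlib

open Finset Polynomial intervalIntegral fwdDiff

lemma hasseDeriv_natDeg (p : ℝ[X]) : p.hasseDeriv p.natDegree = C p.leadingCoeff := by
  ext n
  rw [hasseDeriv_coeff, coeff_C]
  rcases Nat.eq_zero_or_pos n with rfl | hn
  · rw [if_pos rfl, Nat.zero_add, Nat.choose_self, Nat.cast_one, one_mul, leadingCoeff]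
  · rw [if_neg hn.ne', p.coeff_eq_zero_of_natDegree_lt (by omega), mul_zero]

lemma leadingCoeff_taylor_one (p : ℝ[X]) : (taylor 1 p).leadingCoeff = p.leadingCoeff := by
  rw [leadingCoeff, natDegree_taylor, taylor_coeff, hasseDeriv_natDeg, eval_C, leadingCoeff]

lemma fwdDiff_poly (p : ℝ[X]) :
    Δ_[(1:ℝ)] (fun x => p.eval x) = fun x => (taylor 1 p - p).eval x := by
  funext x
  simp [fwdDiff, taylor_eval]

lemma taylor_sub_natDegree (p : ℝ[X]) (hp : 0 < p.natDegree) :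
    (taylor 1 p - p).natDegree < p.natDegree := by
  have hp0 : p ≠ 0 := fun h => by simp [h] at hp
  have ht0 : taylor 1 p ≠ 0 := fun h => by
    have := natDegree_taylor p (1:ℝ); rw [h] at this; simp at this; omega
  have hd : (taylor 1 p).degree = p.degree := by
    rw [degree_eq_natDegree ht0, degree_eq_natDegree hp0, natDegree_taylor]
  have hlt := degree_sub_lt hd ht0 (leadingCoeff_taylor_one p)
  rw [hd] at hlt
  by_cases h0 : taylor 1 p - p = 0
  · rw [h0]; simpa using hp
  · exact natDegree_lt_natDegree h0 hlt

lemma fwdDiff_iter_zero_fun : ∀ n : ℕ, (fwdDiff (1:ℝ))^[n] (fun _ => (0:ℝ)) = 0 := by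
  intro n
  induction n with
  | zero => funext x; simp
  | succ m IHm =>
    rw [Function.iterate_succ_apply,
      show Δ_[(1:ℝ)] (fun _ => (0:ℝ)) = fun _ => 0 from funext fun x => by simp [fwdDiff]]
    exact IHm

lemma fwdDiff_iter_poly_eq_zero (n : ℕ) : ∀ (p : ℝ[X]), p.natDegree < n →
    (fwdDiff (1:ℝ))^[n] (fun x => p.eval x) = 0 := by
  induction n with
  | zero => intro p hp; omega
  | succ n IH =>
    intro p hp
    rw [Function.iterate_succ_apply, fwdDiff_poly]
    rcases Nat.eq_zero_or_pos p.natDegree with h0 | h0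
    · obtain ⟨a, rfl⟩ := natDegree_eq_zero.mp h0
      have : taylor (1:ℝ) (C a) - C a = 0 := by rw [taylor_C, sub_self]
      rw [this]
      simp only [eval_zero]
      exact fwdDiff_iter_zero_fun n
    · exact IH _ (by have := taylor_sub_natDegree p h0; omega)

lemma alternating_sum_poly_eval (n : ℕ) (p : ℝ[X]) (hp : p.natDegree < n) :
    ∑ s ∈ range (n + 1), (-1 : ℝ) ^ s * (n.choose s : ℝ) * p.eval (s : ℝ) = 0 := by
  have h := fwdDiff_iter_eq_sum_shift (1:ℝ) (fun x => p.eval x) n 0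
  rw [fwdDiff_iter_poly_eq_zero n p hp] at h
  have h0 : (0:ℝ) = ∑ k ∈ range (n + 1), ((-1 : ℤ) ^ (n - k) * n.choose k) • p.eval (0 + k • (1:ℝ)) := h
  have : ∑ k ∈ range (n + 1), (-1 : ℝ) ^ (n - k) * (n.choose k : ℝ) * p.eval (k : ℝ) = 0 := by
    rw [eq_comm] at h0
    simpa [zsmul_eq_mul, mul_assoc] using h0
  have key : ∀ k ∈ range (n+1), (-1:ℝ)^(n-k) * (n.choose k :ℝ) * p.eval (k:ℝ)
      = (-1:ℝ)^n * ((-1:ℝ)^k * (n.choose k : ℝ) * p.eval (k:ℝ)) := by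
    intro k hk
    rw [mem_range] at hk
    have : (-1:ℝ)^(n-k) * (-1:ℝ)^k = (-1:ℝ)^n := by
      rw [← pow_add]; congr 1; omega
    rw [← this]; ring_nf; rw [show k*2 = 2*k from mul_comm k 2, pow_mul, neg_one_sq, one_pow, mul_one]
  rw [Finset.sum_congr rfl key, ← Finset.mul_sum] at this
  rcases mul_eq_zero.mp this with h1 | h1
  · exact absurd h1 (by positivity)
  · exact h1

lemma aux_deriv_v (B : ℕ) (c : ℝ) :
    HasDerivAt (fun c : ℝ => 2/((B:ℝ)+1) * ((1+c)/2)^(B+1)) (((1+c)/2)^B) c := by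
  have hB : ((B:ℝ) + 1) ≠ 0 := by positivity
  have h1 : HasDerivAt (fun c : ℝ => (1+c)/2) (1/2) c := by
    simpa using ((hasDerivAt_id c).const_add 1).div_const 2
  have h2 := (h1.pow (B+1)).const_mul (2/((B:ℝ)+1))
  refine h2.congr_deriv ?_
  rw [Nat.add_sub_cancel]; push_cast
  field_simp

lemma beta_nat : ∀ (A B : ℕ), ∫ c in (-1:ℝ)..1, ((1-c)/2)^A * ((1+c)/2)^B
    = 2 * (A.factorial * B.factorial : ℝ) / ((A+B+1).factorial) := by
  intro A
  induction A with
  | zero =>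
    intro B
    have hf : (B.factorial : ℝ) ≠ 0 := by positivity
    simp only [pow_zero, one_mul]
    rw [integral_eq_sub_of_hasDerivAt (fun c _ => aux_deriv_v B c)
      (by apply Continuous.intervalIntegrable; continuity)]
    have e2 : ((1:ℝ) + -1)/2 = 0 := by norm_num
    have e1 : ((1:ℝ) + 1)/2 = 1 := by norm_num
    rw [e1, e2, zero_pow (Nat.succ_ne_zero B), one_pow]
    have h0 : 0 + B + 1 = B + 1 := by omega
    rw [h0, Nat.factorial_succ B, Nat.factorial_zero]
    have hB : ((B:ℝ) + 1) ≠ 0 := by positivity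
    push_cast
    field_simp
    ring
  | succ A IH =>
    intro B
    have hB : ((B:ℝ) + 1) ≠ 0 := by positivity
    have hu : ∀ c ∈ Set.uIcc (-1:ℝ) 1,
        HasDerivAt (fun c : ℝ => ((1-c)/2)^(A+1)) (-((A:ℝ)+1)/2 * ((1-c)/2)^A) c := by
      intro c _
      have h1 : HasDerivAt (fun c : ℝ => (1-c)/2) (-1/2) c := by
        have := ((hasDerivAt_id c).const_sub 1).div_const 2
        norm_num at this
        refine this.congr_deriv ?_
        norm_num
      have h2 := h1.pow (A+1)
      refine h2.congr_deriv ?_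
      push_cast
      ring
    have hparts := integral_mul_deriv_eq_deriv_mul hu (fun c _ => aux_deriv_v B c)
      (by apply Continuous.intervalIntegrable; continuity)
      (by apply Continuous.intervalIntegrable; continuity)
    rw [hparts]
    have hconst : (∫ c in (-1:ℝ)..1,
          (-((A:ℝ)+1)/2 * ((1-c)/2)^A) * (2/((B:ℝ)+1) * ((1+c)/2)^(B+1)))
        = (-((A:ℝ)+1)/((B:ℝ)+1)) * ∫ c in (-1:ℝ)..1, ((1-c)/2)^A * ((1+c)/2)^(B+1) := by
      rw [← intervalIntegral.integral_const_mul]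
      apply intervalIntegral.integral_congr
      intro c _
      field_simp
    rw [hconst, IH (B+1)]
    have e1 : ((1:ℝ) - 1)/2 = 0 := by norm_num
    have e2 : ((1:ℝ) + -1)/2 = 0 := by norm_num
    rw [e1, e2, zero_pow (Nat.succ_ne_zero A), zero_pow (Nat.succ_ne_zero B)]
    have h1 : A + 1 + B + 1 = A + B + 2 := by omega
    have h2 : A + (B+1) + 1 = A + B + 2 := by omega
    rw [h1, h2, Nat.factorial_succ B, Nat.factorial_succ A]
    have hF : (((A+B+2)).factorial : ℝ) ≠ 0 := by positivity
    have hfa : ((A).factorial : ℝ) ≠ 0 := by positivity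
    have hfb : ((B).factorial : ℝ) ≠ 0 := by positivity
    push_cast
    field_simp
    ring

lemma fact_add_eq (a k : ℕ) : (a + k).factorial = a.factorial * ∏ t ∈ range k, (a+1+t) := by
  induction k with
  | zero => simp
  | succ k IH =>
    rw [prod_range_succ, ← mul_assoc, ← IH, show a + (k+1) = (a+k)+1 from rfl,
      Nat.factorial_succ]
    ring

lemma jacobi_inner_sum (N i j r : ℕ) (hji : j < i) (hiN : i ≤ N) (hr : r ≤ j) :
    ∑ s ∈ range (i+1), (-1:ℝ)^s * ((i + (2*N+3-2*i)).choose (i-s) : ℝ) * (i.choose s : ℝ)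
      * ((2+(N-i)+(N-j) + s + r).factorial : ℝ) * (((i-s)+(j-r)).factorial : ℝ) = 0 := by
  set α := 2*N+3-2*i with hα
  set k := i - j - 1 + r with hk
  set P : ℝ[X] := (∏ t ∈ range k, (X + C ((α:ℝ)+1+t))) * (∏ t ∈ range (j-r), (C ((i:ℝ)+1+t) - X))
    with hP
  have hdeg : P.natDegree < i := by
    have h1 : (∏ t ∈ range k, (X + C ((α:ℝ)+1+t))).natDegree ≤ k := by
      refine le_trans (natDegree_prod_le _ _) ?_
      refine le_trans (sum_le_sum fun t _ => ?_) (by simp : ∑ _t ∈ range k, 1 ≤ k)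
      refine le_trans (natDegree_add_le _ _) ?_
      rw [natDegree_X, natDegree_C]
      omega
    have h2 : (∏ t ∈ range (j-r), (C ((i:ℝ)+1+t) - X)).natDegree ≤ j - r := by
      refine le_trans (natDegree_prod_le _ _) ?_
      refine le_trans (sum_le_sum fun t _ => ?_) (by simp : ∑ _t ∈ range (j-r), 1 ≤ j - r)
      refine le_trans (natDegree_sub_le _ _) ?_
      rw [natDegree_X, natDegree_C]
      omega
    have := natDegree_mul_le (p := ∏ t ∈ range k, (X + C ((α:ℝ)+1+t)))
      (q := ∏ t ∈ range (j-r), (C ((i:ℝ)+1+t) - X))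
    rw [← hP] at this
    omega
  have key := alternating_sum_poly_eval i P hdeg
  -- term-by-term equality
  have hterm : ∀ s ∈ range (i+1),
      (-1:ℝ)^s * ((i + α).choose (i-s) : ℝ) * (i.choose s : ℝ)
        * ((2+(N-i)+(N-j) + s + r).factorial : ℝ) * (((i-s)+(j-r)).factorial : ℝ)
      = ((i+α).factorial : ℝ) * ((-1:ℝ)^s * (i.choose s : ℝ) * P.eval (s:ℝ)) := by
    intro s hs
    rw [mem_range] at hs
    have hsi : s ≤ i := by omega
    -- evaluate P
    have heval : P.eval (s:ℝ)
        = ((∏ t ∈ range k, (α+s+1+t) : ℕ) : ℝ) * ((∏ t ∈ range (j-r), ((i-s)+1+t) : ℕ) : ℝ) := by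
      rw [hP, eval_mul, eval_prod, eval_prod]
      push_cast
      congr 1
      · exact prod_congr rfl fun t _ => by simp; ring
      · refine prod_congr rfl fun t _ => ?_
        simp only [eval_sub, eval_C, eval_X]
        have : ((i - s : ℕ) : ℝ) = (i:ℝ) - s := by
          push_cast [hsi]; ring
        rw [this]; ring
    -- nat identities
    have hWr : 2+(N-i)+(N-j) + s + r = α + s + k := by omega
    have hn1 : (α + s + k).factorial = (α+s).factorial * ∏ t ∈ range k, (α+s+1+t) := by
      have := fact_add_eq (α + s) k
      convert this using 3 <;> omega
    have hn2 : ((i-s)+(j-r)).factorial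
        = (i-s).factorial * ∏ t ∈ range (j-r), ((i-s)+1+t) := fact_add_eq (i-s) (j-r)
    have hn3 : (i+α).choose (i-s) * ((i-s).factorial * (α+s).factorial) = (i+α).factorial := by
      have hle : i - s ≤ i + α := by omega
      have := Nat.choose_mul_factorial_mul_factorial hle
      have hsub : i + α - (i - s) = α + s := by omega
      rw [hsub] at this
      rw [← this]; ring
    have hbig : (i + α).choose (i-s) * (2+(N-i)+(N-j) + s + r).factorial
          * (((i-s)+(j-r)).factorial)
        = (i+α).factorial * ((∏ t ∈ range k, (α+s+1+t)) * ∏ t ∈ range (j-r), ((i-s)+1+t)) := by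
      rw [hWr, hn1, hn2, ← hn3]
      ring
    have hbigR : (((i + α).choose (i-s) : ℕ) : ℝ) * ((2+(N-i)+(N-j)+s+r).factorial : ℝ)
          * (((i-s)+(j-r)).factorial : ℝ)
        = ((i+α).factorial : ℝ) * (((∏ t ∈ range k, (α+s+1+t) : ℕ) : ℝ)
          * ((∏ t ∈ range (j-r), ((i-s)+1+t) : ℕ) : ℝ)) := by
      exact_mod_cast congrArg (Nat.cast : ℕ → ℝ) hbig
    rw [heval]
    linear_combination ((-1:ℝ)^s * (i.choose s : ℝ)) * hbigR
  rw [sum_congr rfl hterm, ← mul_sum, key, mul_zero]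

open Finset in
/-- The Jacobi polynomial `P_n^{(α,0)}` (as a real function), defined by the explicit
formula `P_n^{(α,0)}(x) = ∑_{s=0}^{n} C(n+α, n−s)·C(n, s)·((x−1)/2)^s·((x+1)/2)^{n−s}`. -/
noncomputable def jacobiP (n α : ℕ) (x : ℝ) : ℝ :=
  ∑ s ∈ range (n + 1),
    ((n + α).choose (n - s) : ℝ) * (n.choose s : ℝ) * ((x - 1) / 2) ^ s * ((x + 1) / 2) ^ (n - s)

/-- For integers `N ≥ 0` and `0 ≤ j < i ≤ N`,
`∫_{−1}^{1} ((1−c)/2)^{2+(N−i)+(N−j)} · P_i^{(2N+3−2i,0)}(c) · P_j^{(2N+3−2j,0)}(c) dc = 0`. -/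
theorem jacobi_weighted_orthogonality (N i j : ℕ) (hji : j < i) (hiN : i ≤ N) :
    ∫ c in (-1 : ℝ)..1,
        ((1 - c) / 2) ^ (2 + (N - i) + (N - j)) *
          jacobiP i (2 * N + 3 - 2 * i) c * jacobiP j (2 * N + 3 - 2 * j) c = 0 := by
  set W := 2 + (N - i) + (N - j) with hW
  set K : ℕ → ℕ → ℝ := fun s r => (-1:ℝ)^(s+r) * ((i + (2*N+3-2*i)).choose (i-s) : ℝ)
    * (i.choose s : ℝ) * ((j + (2*N+3-2*j)).choose (j-r) : ℝ) * (j.choose r : ℝ) with hK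
  have hexp : Set.EqOn
      (fun c : ℝ => ((1 - c) / 2) ^ W * jacobiP i (2 * N + 3 - 2 * i) c
        * jacobiP j (2 * N + 3 - 2 * j) c)
      (fun c : ℝ => ∑ s ∈ range (i+1), ∑ r ∈ range (j+1),
        K s r * (((1-c)/2)^(W+s+r) * ((1+c)/2)^((i-s)+(j-r))))
      (Set.uIcc (-1) 1) := by
    intro c _
    simp only [jacobiP]
    rw [mul_assoc, Finset.sum_mul_sum, Finset.mul_sum]
    refine sum_congr rfl fun s _ => ?_
    rw [Finset.mul_sum]
    refine sum_congr rfl fun r _ => ?_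
    have h1 : ((c - 1)/2 : ℝ) = -((1-c)/2) := by ring
    have h2 : ∀ n : ℕ, (((c - 1))/2)^n = (-1:ℝ)^n * ((1-c)/2)^n := fun n => by
      rw [h1, neg_pow]
    rw [hK, h2 s, h2 r]
    ring
  rw [intervalIntegral.integral_congr hexp,
    intervalIntegral.integral_finset_sum (fun s _ => by
      apply Continuous.intervalIntegrable; fun_prop)]
  have hswap : ∀ s ∈ range (i+1),
      (∫ c in (-1:ℝ)..1, ∑ r ∈ range (j+1),
        K s r * (((1-c)/2)^(W+s+r) * ((1+c)/2)^((i-s)+(j-r))))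
      = ∑ r ∈ range (j+1), K s r
          * (2 * (((W+s+r).factorial : ℝ) * (((i-s)+(j-r)).factorial : ℝ))
            / (((W+s+r) + ((i-s)+(j-r)) + 1).factorial : ℝ)) := by
    intro s _
    rw [intervalIntegral.integral_finset_sum (fun r _ => by
      apply Continuous.intervalIntegrable; fun_prop)]
    refine sum_congr rfl fun r _ => ?_
    rw [intervalIntegral.integral_const_mul, beta_nat]
  rw [sum_congr rfl hswap, Finset.sum_comm]
  refine Finset.sum_eq_zero fun r hrm => ?_
  rw [mem_range] at hrm
  have hr : r ≤ j := by omega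
  have hterm2 : ∀ s ∈ range (i+1),
      K s r * (2 * (((W+s+r).factorial : ℝ) * (((i-s)+(j-r)).factorial : ℝ))
        / (((W+s+r) + ((i-s)+(j-r)) + 1).factorial : ℝ))
      = ((-1:ℝ)^r * ((j + (2*N+3-2*j)).choose (j-r) : ℝ) * (j.choose r : ℝ) * 2
          / (((2*N+3).factorial : ℝ)))
        * ((-1:ℝ)^s * ((i + (2*N+3-2*i)).choose (i-s) : ℝ) * (i.choose s : ℝ)
          * ((W + s + r).factorial : ℝ) * (((i-s)+(j-r)).factorial : ℝ)) := by
    intro s hs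
    rw [mem_range] at hs
    have hD : (W+s+r) + ((i-s)+(j-r)) + 1 = 2*N+3 := by omega
    rw [hD, hK]
    ring
  rw [sum_congr rfl hterm2, ← Finset.mul_sum,
    jacobi_inner_sum N i j r hji hiN hr, mul_zero]
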